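/- For two distinct positive integers ID and ID' with |b(ID)| ≥ |b(ID')|, and for any phase j ≥ j̄ := ⌈log₂(|b(ID)| + 3)⌉, the direction strings d(ID, j) and d(ID', j) agree at the last position and disagree at some position; i.e., there exist indices x, y < 2^j with (d(ID,j))_x ≠ (d(ID',j))_x and (d(ID,j))_y = (d(ID',j))_y. -/

import Mathlib

/-- `Dup S k` repeats each character of the binary string `S` exactly `k` consecutive times. -/
def Dup (S : List Bool) (k : ℕ) : List Bool := S.flatMap (List.replicate k)

/-- `bRep x` is the minimal (no leading zeros) big-endian binary representation of `x`. -/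
def bRep (x : ℕ) : List Bool := (Nat.bits x).reverse

/-- `SID x = 10 ∘ b(x) ∘ 0`. -/
def SID (x : ℕ) : List Bool := [true, false] ++ bRep x ++ [false]

/-- `jbar ID` is the minimal `j` with `2^j ≥ |S(ID)| = |b(ID)| + 3`. -/
def jbar (ID : ℕ) : ℕ := Nat.clog 2 (SID ID).length

/-- `pad` of `S(ID)`: prepend zeros to reach length exactly `2^(jbar ID)`. -/
def padS (ID : ℕ) : List Bool :=
  List.replicate (2 ^ jbar ID - (SID ID).length) false ++ SID ID

/-- The direction string for phase `j`: `d(ID, j) = Dup(pad(S(ID)), 2^(j - jbar ID))`,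
a binary string of length `2^j`. -/
def dirString (ID j : ℕ) : List Bool := Dup (padS ID) (2 ^ (j - jbar ID))

lemma Dup_nil (k : ℕ) : Dup [] k = [] := rfl
lemma Dup_cons (a : Bool) (S : List Bool) (k : ℕ) :
    Dup (a :: S) k = List.replicate k a ++ Dup S k := rfl

lemma Dup_length (S : List Bool) (k : ℕ) : (Dup S k).length = S.length * k := by
  induction S with
  | nil => simp [Dup_nil]
  | cons a S ih => simp [Dup_cons, ih]; ring

lemma Dup_getD (S : List Bool) (k : ℕ) (hk : 0 < k) (i : ℕ) (hi : i < S.length * k)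
    (d : Bool) : (Dup S k).getD i d = S.getD (i / k) d := by
  induction S generalizing i with
  | nil => simp at hi
  | cons a S ih =>
    rw [Dup_cons]
    by_cases h : i < k
    · rw [List.getD_append _ _ _ _ (by simpa using h), Nat.div_eq_of_lt h]
      simp [List.getD, h]
    · push_neg at h
      rw [List.getD_append_right _ _ _ _ (by simpa using h), List.length_replicate]
      have hi' : i - k < S.length * k := by simp [Nat.succ_mul] at hi; omega
      rw [ih (i - k) hi']
      have : i / k = (i - k) / k + 1 := by
        conv_lhs => rw [show i = (i - k) + 1 * k by omega]
        rw [Nat.add_mul_div_right _ _ hk]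
      rw [this]
      simp [List.getD]

lemma flatMap_replicate (x : Bool) (n b : ℕ) :
    (List.replicate n x).flatMap (List.replicate b) = List.replicate (n * b) x := by
  induction n with
  | zero => simp
  | succ m ih =>
    simp only [List.replicate_succ, List.flatMap_cons, ih, Nat.succ_mul]
    rw [Nat.add_comm, List.replicate_add]

lemma Dup_Dup (S : List Bool) (a b : ℕ) : Dup (Dup S a) b = Dup S (a * b) := by
  induction S with
  | nil => rfl
  | cons x S ih =>
    rw [Dup_cons, Dup_cons, ← ih]
    show (List.replicate a x ++ Dup S a).flatMap _ = _
    rw [List.flatMap_append]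
    congr 1
    exact flatMap_replicate x a b

lemma Dup_inj {S T : List Bool} {k : ℕ} (hk : 0 < k) (h : Dup S k = Dup T k) : S = T := by
  have hlen : S.length = T.length := by
    have := congrArg List.length h
    rw [Dup_length, Dup_length] at this
    exact Nat.eq_of_mul_eq_mul_right hk this
  apply List.ext_getElem hlen
  intro i h1 h2
  have h1' : i * k < S.length * k := (Nat.mul_lt_mul_right hk).mpr h1
  have := congrArg (fun l => List.getD l (i * k) false) h
  rw [Dup_getD S k hk _ h1' false, Dup_getD T k hk _ (hlen ▸ h1') false,
    Nat.mul_div_cancel _ hk] at this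
  rw [List.getD_eq_getElem _ _ h1, List.getD_eq_getElem _ _ h2] at this
  exact this

lemma rep_append_inj : ∀ (m m' : ℕ) (l l' : List Bool),
    List.replicate m false ++ true :: l = List.replicate m' false ++ true :: l' →
    m = m' ∧ l = l' := by
  intro m
  induction m with
  | zero =>
    intro m' l l' h
    cases m' with
    | zero => simpa using h
    | succ n => simp [List.replicate_succ] at h
  | succ n ih =>
    intro m' l l' h
    cases m' with
    | zero => simp [List.replicate_succ] at h
    | succ n' =>
      simp only [List.replicate_succ, List.cons_append, List.cons.injEq] at h
      obtain ⟨a, b⟩ := ih n' l l' h.2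
      exact ⟨by omega, b⟩

lemma bits_getLast? (n : ℕ) (hn : 0 < n) : (Nat.bits n).getLast? = some true := by
  induction n using Nat.strong_induction_on with
  | _ n ih =>
  rcases Nat.lt_or_ge n 2 with h2 | h2
  · have : n = 1 := by omega
    subst this; simp
  · have hd : 0 < n / 2 := by omega
    have hb : Nat.bit n.bodd n.div2 = n := Nat.bit_bodd_div2 n
    have : (Nat.bits n) = n.bodd :: (n.div2).bits := by
      conv_lhs => rw [← hb]
      exact Nat.bits_append_bit _ _ (fun h => by
        exfalso; have := Nat.div2_val n; omega)
    rw [this]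
    have hne : (n.div2).bits ≠ [] := by
      intro hh
      have := ih n.div2 (by rw [Nat.div2_val]; omega) (by rw [Nat.div2_val]; omega)
      rw [hh] at this; simp at this
    have hih := ih n.div2 (by rw [Nat.div2_val]; omega) (by rw [Nat.div2_val]; omega)
    rw [List.getLast?_cons, hih]
    rfl

lemma bits_inj : Function.Injective Nat.bits := by
  intro n
  induction n using Nat.strong_induction_on with
  | _ n ih =>
  intro m h
  rcases Nat.eq_zero_or_pos n with hn | hn
  · subst hn
    rcases Nat.eq_zero_or_pos m with hm | hm
    · omega
    · exfalso
      have := bits_getLast? m hm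
      rw [← h] at this; simp at this
  rcases Nat.eq_zero_or_pos m with hm | hm
  · exfalso
    subst hm
    have := bits_getLast? n hn
    rw [h] at this; simp at this
  have hb : Nat.bit n.bodd n.div2 = n := Nat.bit_bodd_div2 n
  have hbm : Nat.bit m.bodd m.div2 = m := Nat.bit_bodd_div2 m
  have hn2 : (Nat.bits n) = n.bodd :: (n.div2).bits := by
    conv_lhs => rw [← hb]
    exact Nat.bits_append_bit _ _ (fun hh => by
      rw [hh] at hb
      cases hc : n.bodd
      · rw [hc, Nat.bit_val] at hb; simp at hb; omega
      · rfl)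
  have hm2 : (Nat.bits m) = m.bodd :: (m.div2).bits := by
    conv_lhs => rw [← hbm]
    exact Nat.bits_append_bit _ _ (fun hh => by
      rw [hh] at hbm
      cases hc : m.bodd
      · rw [hc, Nat.bit_val] at hbm; simp at hbm; omega
      · rfl)
  rw [hn2, hm2, List.cons.injEq] at h
  have hd : n.div2 = m.div2 := by
    rcases Nat.eq_zero_or_pos n.div2 with hz | hz
    · rw [hz]
      by_contra hzz
      have : 0 < m.div2 := by omega
      have := bits_getLast? m.div2 this
      rw [← h.2, hz] at this
      simp at this
    · exact ih n.div2 (by rw [Nat.div2_val]; omega) h.2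
  rw [← hb, ← hbm, h.1, hd]

lemma SID_length (x : ℕ) : (SID x).length = (bRep x).length + 3 := by
  simp [SID]

lemma SID_le_pow (x : ℕ) : (SID x).length ≤ 2 ^ jbar x :=
  Nat.le_pow_clog one_lt_two _

lemma padS_length (x : ℕ) : (padS x).length = 2 ^ jbar x := by
  have := SID_le_pow x
  simp [padS]; omega

lemma getD_rep_append (m i : ℕ) (a d : Bool) (l : List Bool) :
    (List.replicate m a ++ l).getD (m + i) d = l.getD i d := by
  rw [List.getD_append_right _ _ _ _ (by simp)]
  simp

lemma bRep_head {x : ℕ} (hx : 0 < x) : ∃ t, bRep x = true :: t := by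
  have h := bits_getLast? x hx
  have h2 : (bRep x).head? = some true := by rw [bRep, List.head?_reverse, h]
  cases hb : bRep x with
  | nil => rw [hb] at h2; simp at h2
  | cons a t =>
    rw [hb] at h2; simp at h2
    exact ⟨t, by rw [h2]⟩

lemma SID_cons (x : ℕ) : SID x = true :: false :: (bRep x ++ [false]) := by
  simp [SID]

lemma padS_getD_last (x : ℕ) :
    (padS x).getD (2 ^ jbar x - 1) false = false := by
  have hL := SID_le_pow x
  have hSlen : (SID x).length = (bRep x).length + 3 := SID_length x
  have hidx : 2 ^ jbar x - 1 =
      (2 ^ jbar x - (SID x).length) + ((bRep x).length + 2) := by omega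
  rw [padS, hidx, getD_rep_append, SID_cons]
  show (true :: false :: (bRep x ++ [false])).getD ((bRep x).length + 1 + 1) false = false
  rw [List.getD_cons_succ, List.getD_cons_succ,
    List.getD_append_right _ _ _ _ (le_refl _)]
  simp

/-- For distinct positive `ID, ID'` with `|b(ID)| ≥ |b(ID')|` and any phase
`j ≥ ⌈log₂(|b(ID)| + 3)⌉`, the direction strings `d(ID, j)` and `d(ID', j)` disagree at some
position `x < 2^j` and agree at some position `y < 2^j`. -/
theorem dirString_disagree_agree (ID ID' : ℕ) (hID : 1 ≤ ID) (hID' : 1 ≤ ID')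
    (hne : ID ≠ ID') (hlen : (bRep ID').length ≤ (bRep ID).length)
    (j : ℕ) (hj : Nat.clog 2 ((bRep ID).length + 3) ≤ j) :
    ∃ x y : ℕ, x < 2 ^ j ∧ y < 2 ^ j ∧
      (dirString ID j).getD x false ≠ (dirString ID' j).getD x false ∧
      (dirString ID j).getD y false = (dirString ID' j).getD y false := by
  have hjb : jbar ID ≤ j := by rwa [jbar, SID_length]
  have hjb' : jbar ID' ≤ jbar ID := by
    apply Nat.clog_mono_right
    rw [SID_length, SID_length]; omega
  have hpow : ∀ x : ℕ, jbar x ≤ j → (dirString x j).length = 2 ^ j := by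
    intro x hx
    rw [dirString, Dup_length, padS_length, ← pow_add]
    congr 1; omega
  have hlen1 := hpow ID hjb
  have hlen2 := hpow ID' (le_trans hjb' hjb)
  have hpos : 0 < 2 ^ j := Nat.pow_pos (by norm_num)
  -- the agreement index: last position
  have hlast : ∀ x : ℕ, jbar x ≤ j →
      (dirString x j).getD (2 ^ j - 1) false = false := by
    intro x hx
    have hk : 0 < 2 ^ (j - jbar x) := Nat.pow_pos (by norm_num)
    have hb : 2 ^ j - 1 < (padS x).length * 2 ^ (j - jbar x) := by
      rw [padS_length, ← pow_add, show jbar x + (j - jbar x) = j by omega]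
      omega
    rw [dirString, Dup_getD _ _ hk _ hb]
    have hdiv : (2 ^ j - 1) / 2 ^ (j - jbar x) = 2 ^ jbar x - 1 := by
      have he : 2 ^ j = 2 ^ jbar x * 2 ^ (j - jbar x) := by
        rw [← pow_add]; congr 1; omega
      have hp : 0 < 2 ^ jbar x := Nat.pow_pos (by norm_num)
      have e : 2 ^ j - 1 = (2 ^ (j - jbar x) - 1) + (2 ^ jbar x - 1) * 2 ^ (j - jbar x) := by
        rw [Nat.sub_one_mul, ← he]
        have : 2 ^ (j - jbar x) ≤ 2 ^ j := Nat.pow_le_pow_right (by norm_num) (by omega)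
        omega
      rw [e, Nat.add_mul_div_right _ _ hk, Nat.div_eq_of_lt (by omega)]
      omega
    rw [hdiv]
    exact padS_getD_last x
  -- the disagreement: strings are distinct
  have hneq : dirString ID j ≠ dirString ID' j := by
    intro heq
    rcases Nat.lt_or_ge (jbar ID') (jbar ID) with hc | hc
    · -- jbar ID' < jbar ID : padS ID = Dup (padS ID') 2^t with t ≥ 1
      set t := jbar ID - jbar ID' with ht
      have ht1 : 1 ≤ t := by omega
      have hkpos : 0 < 2 ^ (j - jbar ID) := Nat.pow_pos (by norm_num)
      have hsplit : (2 : ℕ) ^ (j - jbar ID') = 2 ^ t * 2 ^ (j - jbar ID) := by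
        rw [← pow_add]; congr 1; omega
      rw [dirString, dirString, hsplit, ← Dup_Dup] at heq
      have hpd : padS ID = Dup (padS ID') (2 ^ t) := Dup_inj hkpos heq
      -- indices m, m+1, m+2 carry values true, false, true
      set m := 2 ^ jbar ID - (SID ID).length with hm
      have hLle := SID_le_pow ID
      have hL3 : 3 ≤ (SID ID).length := by rw [SID_length]; omega
      obtain ⟨tl, htl⟩ := bRep_head hID
      have hv0 : (padS ID).getD m false = true := by
        rw [padS, show m = m + 0 by omega, getD_rep_append, SID_cons]; rfl
      have hv1 : (padS ID).getD (m + 1) false = false := by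
        rw [padS, getD_rep_append, SID_cons]; rfl
      have hv2 : (padS ID).getD (m + 2) false = true := by
        rw [padS, getD_rep_append, SID_cons, htl]; rfl
      -- Dup with factor 2^t, t ≥ 1: adjacent (even-aligned) positions agree
      have hlen' : (Dup (padS ID') (2 ^ t)).length = 2 ^ jbar ID := by
        rw [Dup_length, padS_length, ← pow_add]; congr 1; omega
      have hbound : m + 2 < 2 ^ jbar ID := by omega
      have htpos : 0 < 2 ^ t := Nat.pow_pos (by norm_num)
      have hgd : ∀ i, i < 2 ^ jbar ID →
          (padS ID).getD i false = (padS ID').getD (i / 2 ^ t) false := by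
        intro i hi
        rw [hpd, Dup_getD _ _ htpos _ (by rw [padS_length, ← pow_add,
          show jbar ID' + t = jbar ID by omega]; exact hi)]
      have h2t : (2 : ℕ) ^ t = 2 * 2 ^ (t - 1) := by
        rw [← pow_succ', Nat.sub_add_cancel ht1]
      have hdd : ∀ i i', i / 2 = i' / 2 → i / 2 ^ t = i' / 2 ^ t := by
        intro i i' h
        rw [h2t, ← Nat.div_div_eq_div_mul, ← Nat.div_div_eq_div_mul, h]
      rcases Nat.mod_two_eq_zero_or_one m with he | ho
      · have : m / 2 = (m + 1) / 2 := by omega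
        have := hdd m (m + 1) this
        have := (hgd m (by omega)).trans (this ▸ (hgd (m + 1) (by omega)).symm)
        rw [hv0, hv1] at this
        exact absurd this (by simp)
      · have : (m + 1) / 2 = (m + 2) / 2 := by omega
        have := hdd (m + 1) (m + 2) this
        have := (hgd (m + 1) (by omega)).trans (this ▸ (hgd (m + 2) (by omega)).symm)
        rw [hv1, hv2] at this
        exact absurd this (by simp)
    · -- jbar ID = jbar ID'
      have hceq : jbar ID = jbar ID' := by omega
      rw [dirString, dirString, ← hceq] at heq
      have hkpos : 0 < 2 ^ (j - jbar ID) := Nat.pow_pos (by norm_num)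
      have hpd : padS ID = padS ID' := Dup_inj hkpos heq
      rw [padS, padS, SID_cons, SID_cons, ← hceq] at hpd
      obtain ⟨-, htail⟩ := rep_append_inj _ _ _ _ hpd
      simp only [List.cons.injEq, true_and] at htail
      have hb : bRep ID = bRep ID' := by
        have := List.append_inj_left htail (by
          have := congrArg List.length htail
          simpa using this)
        exact this
      apply hne
      apply bits_inj
      have := congrArg List.reverse hb
      simpa [bRep] using this
  have hx : ∃ x, x < 2 ^ j ∧
      (dirString ID j).getD x false ≠ (dirString ID' j).getD x false := by
    by_contra h
    push_neg at h
    apply hneq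
    apply List.ext_getElem (hlen1.trans hlen2.symm)
    intro i h1 h2
    have hgd := h i (hlen1 ▸ h1)
    rw [List.getD_eq_getElem _ _ h1, List.getD_eq_getElem _ _ h2] at hgd
    exact hgd
  obtain ⟨x, hx1, hx2⟩ := hx
  exact ⟨x, 2 ^ j - 1, hx1, by omega, hx2,
    by rw [hlast ID hjb, hlast ID' (le_trans hjb' hjb)]⟩
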